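/- Suppose v_1, …, v_q : X → E is a measurable frame such that sup_{x∈X, 1≤i≤q} ‖v_i(x)‖ < ∞ and there is a constant C > 0 such that for μ-almost every x the Gram matrix G(x) is invertible and the operator norm of G(x)^{-1} on ℂ^q is at most C. Then the frame is L²-adapted: for all measurable functions f_1, …, f_q : X → ℂ, if ∫_X ‖Σ_{i=1}^q f_i(x) v_i(x)‖² dμ(x) < ∞, then ∫_X |f_i(x)|² ‖v_i(x)‖² dμ(x) < ∞ for every i = 1, …, q. -/

import Mathlib

open MeasureTheory
open scoped ENNReal NNReal

lemma ptwise_bound {E : Type*} [NormedAddCommGroup E] [InnerProductSpace ℂ E]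
    {q : ℕ} (v : Fin q → E) (c : Fin q → ℂ) (M C : ℝ)
    (hM : ∀ i, ‖v i‖ ≤ M)
    (hG : IsUnit (Matrix.of fun i j : Fin q => (inner ℂ (v i) (v j) : ℂ)))
    (hC : ‖Matrix.toEuclideanCLM (𝕜 := ℂ)
        (Matrix.of fun i j : Fin q => (inner ℂ (v i) (v j) : ℂ))⁻¹‖ ≤ C)
    (hCpos : 0 ≤ C)
    (i : Fin q) :
    ‖c i‖ ≤ C * (Real.sqrt q * (M * ‖∑ j, c j • v j‖)) := by
  have hM0 : 0 ≤ M := le_trans (norm_nonneg _) (hM i)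
  set G := Matrix.of fun i j : Fin q => (inner ℂ (v i) (v j) : ℂ) with hGdef
  set S := ∑ j, c j • v j with hS
  set w : EuclideanSpace ℂ (Fin q) := (WithLp.equiv 2 _).symm c with hw
  have hGw : Matrix.toEuclideanCLM (𝕜 := ℂ) G w
      = (WithLp.equiv 2 _).symm (fun i => (inner ℂ (v i) S : ℂ)) := by
    rw [hw, WithLp.equiv_symm_apply, Matrix.toEuclideanCLM_toLp]
    congr 1
    funext k
    simp [Matrix.toLin'_apply, Matrix.mulVec, dotProduct, hS, inner_sum,
      inner_smul_right, hGdef, mul_comm]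
  have hww : w = Matrix.toEuclideanCLM (𝕜 := ℂ) G⁻¹ (Matrix.toEuclideanCLM (𝕜 := ℂ) G w) := by
    rw [← ContinuousLinearMap.comp_apply, ← ContinuousLinearMap.mul_def, ← map_mul,
      Matrix.nonsing_inv_mul _ ((Matrix.isUnit_iff_isUnit_det G).mp hG), map_one]
    rfl
  have h1 : ‖c i‖ ≤ ‖w‖ := by
    rw [EuclideanSpace.norm_eq]
    have : ‖c i‖ = Real.sqrt (‖c i‖ ^ 2) := (Real.sqrt_sq (norm_nonneg _)).symm
    rw [this]
    apply Real.sqrt_le_sqrt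
    exact Finset.single_le_sum (f := fun j => ‖c j‖ ^ 2)
      (fun j _ => sq_nonneg _) (Finset.mem_univ i)
  have h2 : ‖w‖ ≤ C * ‖Matrix.toEuclideanCLM (𝕜 := ℂ) G w‖ := by
    calc ‖w‖ = ‖Matrix.toEuclideanCLM (𝕜 := ℂ) G⁻¹ (Matrix.toEuclideanCLM (𝕜 := ℂ) G w)‖ := by
          rw [← hww]
      _ ≤ ‖Matrix.toEuclideanCLM (𝕜 := ℂ) G⁻¹‖ * ‖Matrix.toEuclideanCLM (𝕜 := ℂ) G w‖ :=
          ContinuousLinearMap.le_opNorm _ _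
      _ ≤ C * ‖Matrix.toEuclideanCLM (𝕜 := ℂ) G w‖ :=
          mul_le_mul_of_nonneg_right hC (norm_nonneg _)
  have h3 : ‖Matrix.toEuclideanCLM (𝕜 := ℂ) G w‖ ≤ Real.sqrt q * (M * ‖S‖) := by
    rw [hGw, EuclideanSpace.norm_eq]
    have hbound : ∀ k : Fin q, ‖(inner ℂ (v k) S : ℂ)‖ ^ 2 ≤ (M * ‖S‖) ^ 2 := by
      intro k
      have := norm_inner_le_norm (𝕜 := ℂ) (v k) S
      have h' : ‖(inner ℂ (v k) S : ℂ)‖ ≤ M * ‖S‖ :=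
        this.trans (mul_le_mul_of_nonneg_right (hM k) (norm_nonneg _))
      exact pow_le_pow_left₀ (norm_nonneg _) h' 2
    calc Real.sqrt (∑ k, ‖((WithLp.equiv 2 _).symm (fun i => (inner ℂ (v i) S : ℂ))) k‖ ^ 2)
        ≤ Real.sqrt (q * (M * ‖S‖) ^ 2) := by
          apply Real.sqrt_le_sqrt
          calc (∑ k, ‖((WithLp.equiv 2 _).symm (fun i => (inner ℂ (v i) S : ℂ))) k‖ ^ 2)
              = ∑ k : Fin q, ‖(inner ℂ (v k) S : ℂ)‖ ^ 2 := rfl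
            _ ≤ ∑ _k : Fin q, (M * ‖S‖) ^ 2 := Finset.sum_le_sum fun k _ => hbound k
            _ = q * (M * ‖S‖) ^ 2 := by simp [Finset.sum_const, nsmul_eq_mul]
      _ = Real.sqrt q * (M * ‖S‖) := by
          rw [Real.sqrt_mul (by positivity), Real.sqrt_sq (by positivity)]
  have hci : ‖c i‖ = ‖w i‖ := rfl
  calc ‖c i‖ ≤ ‖w‖ := h1
    _ ≤ C * ‖Matrix.toEuclideanCLM (𝕜 := ℂ) G w‖ := h2
    _ ≤ C * (Real.sqrt q * (M * ‖S‖)) := mul_le_mul_of_nonneg_left h3 hCpos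
/-- A measurable frame `v₁, …, v_q : X → E` with uniformly bounded norms and with
Gram matrices having (a.e.) uniformly bounded inverses (in operator norm on `ℂ^q`)
is `L²`-adapted: if a combination `∑ i, f i • v i` is square integrable, then each
summand `f i • v i` is square integrable. -/
theorem l2Adapted_of_bounded_gram_inverse
    {X : Type*} [MeasurableSpace X] (μ : Measure X)
    {E : Type*} [NormedAddCommGroup E] [InnerProductSpace ℂ E] [FiniteDimensional ℂ E]
    [MeasurableSpace E] [BorelSpace E]
    {q : ℕ} (v : Fin q → X → E)
    (hvmeas : ∀ i, Measurable (v i))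
    (hframe : ∀ x, LinearIndependent ℂ fun i => v i x)
    (M : ℝ) (hM : ∀ (x : X) (i : Fin q), ‖v i x‖ ≤ M)
    (C : ℝ) (hC : 0 < C)
    (hgram : ∀ᵐ x ∂μ,
      IsUnit (Matrix.of fun i j : Fin q => (inner ℂ (v i x) (v j x) : ℂ)) ∧
      ‖Matrix.toEuclideanCLM (𝕜 := ℂ)
          (Matrix.of fun i j : Fin q => (inner ℂ (v i x) (v j x) : ℂ))⁻¹‖ ≤ C)
    (f : Fin q → X → ℂ) (hfmeas : ∀ i, Measurable (f i))
    (hL2 : ∫⁻ x, (‖∑ i, f i x • v i x‖₊ : ℝ≥0∞) ^ 2 ∂μ < ⊤) :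
    ∀ i, ∫⁻ x, (‖f i x • v i x‖₊ : ℝ≥0∞) ^ 2 ∂μ < ⊤ := by
  intro i
  set M' : ℝ := max M 0 with hM'def
  have hM' : ∀ (x : X) (j : Fin q), ‖v j x‖ ≤ M' := fun x j => (hM x j).trans (le_max_left _ _)
  set K : ℝ := C * (Real.sqrt q * (M' * 1)) * M' with hKdef
  have hK0 : 0 ≤ K := by positivity
  have hpt : ∀ᵐ x ∂μ, (‖f i x • v i x‖₊ : ℝ≥0∞) ^ 2 ≤
      ENNReal.ofReal (K ^ 2) * (‖∑ j, f j x • v j x‖₊ : ℝ≥0∞) ^ 2 := by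
    filter_upwards [hgram] with x ⟨hGx, hCx⟩
    have hreal : ‖f i x • v i x‖ ≤ K * ‖∑ j, f j x • v j x‖ := by
      have h1 : ‖f i x‖ ≤ C * (Real.sqrt q * (M' * ‖∑ j, f j x • v j x‖)) :=
        ptwise_bound (fun j => v j x) (fun j => f j x) M' C (fun j => hM' x j)
          hGx hCx hC.le i
      calc ‖f i x • v i x‖ = ‖f i x‖ * ‖v i x‖ := norm_smul _ _
        _ ≤ (C * (Real.sqrt q * (M' * ‖∑ j, f j x • v j x‖))) * M' :=
            mul_le_mul h1 (hM' x i) (norm_nonneg _) (by positivity)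
        _ = K * ‖∑ j, f j x • v j x‖ := by rw [hKdef]; ring
    have hsq : ‖f i x • v i x‖ ^ 2 ≤ K ^ 2 * ‖∑ j, f j x • v j x‖ ^ 2 := by
      rw [← mul_pow]
      exact pow_le_pow_left₀ (norm_nonneg _) hreal 2
    calc (‖f i x • v i x‖₊ : ℝ≥0∞) ^ 2
        = ENNReal.ofReal (‖f i x • v i x‖ ^ 2) := by
          rw [← enorm_eq_nnnorm, ← ofReal_norm, ← ENNReal.ofReal_pow (norm_nonneg _)]
      _ ≤ ENNReal.ofReal (K ^ 2 * ‖∑ j, f j x • v j x‖ ^ 2) := ENNReal.ofReal_le_ofReal hsq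
      _ = ENNReal.ofReal (K ^ 2) * (‖∑ j, f j x • v j x‖₊ : ℝ≥0∞) ^ 2 := by
          rw [ENNReal.ofReal_mul (sq_nonneg _), ENNReal.ofReal_pow (norm_nonneg _),
            ofReal_norm, enorm_eq_nnnorm]
  calc ∫⁻ x, (‖f i x • v i x‖₊ : ℝ≥0∞) ^ 2 ∂μ
      ≤ ∫⁻ x, ENNReal.ofReal (K ^ 2) * (‖∑ j, f j x • v j x‖₊ : ℝ≥0∞) ^ 2 ∂μ :=
        lintegral_mono_ae hpt
    _ = ENNReal.ofReal (K ^ 2) * ∫⁻ x, (‖∑ j, f j x • v j x‖₊ : ℝ≥0∞) ^ 2 ∂μ :=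
        lintegral_const_mul' _ _ ENNReal.ofReal_ne_top
    _ < ⊤ := ENNReal.mul_lt_top ENNReal.ofReal_lt_top hL2
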